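/- Let M = (S, ρ) be a matroid scheme and let I(M) = {x ∈ S : ρ(x) = |x|} be its independence poset. Then I(M) satisfies: (I1) I(M) is nonempty; (I2) if x ≤ y and y ∈ I(M), then x ∈ I(M); (I3) if x, y ∈ I(M) and |x| < |y|, then there is an atom a of S with a ≤ y, a ≰ x, and x∨a a nonempty subset of I(M); (I4) if x, y ∈ S, z is a maximal element of I(M)_{≤x} = {w ∈ I(M) : w ≤ x}, and z ≤ y, then x∨y ≠ ∅. -/

import Mathlib

/-- The set of minimal upper bounds of `x` and `y` (denoted `x ∨ y` in the paper). -/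
def mub {S : Type*} [PartialOrder S] (x y : S) : Set S :=
  {u | x ≤ u ∧ y ≤ u ∧ ∀ v, x ≤ v → y ≤ v → v ≤ u → v = u}

/-- The set of maximal lower bounds of `x` and `y` (denoted `x ∧ y` in the paper). -/
def mlb {S : Type*} [PartialOrder S] (x y : S) : Set S :=
  {l | l ≤ x ∧ l ≤ y ∧ ∀ m, m ≤ x → m ≤ y → l ≤ m → m = l}

/-- The set of minimal upper bounds of a subset `T`. -/
def mubSet {S : Type*} [PartialOrder S] (T : Set S) : Set S :=
  {u | (∀ t ∈ T, t ≤ u) ∧ ∀ v, (∀ t ∈ T, t ≤ v) → v ≤ u → v = u}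

/-- The number of atoms below `x`, i.e. `|x|`, the rank of `x` in a simplicial poset. -/
noncomputable def natRank {S : Type*} [PartialOrder S] [OrderBot S] (x : S) : ℕ :=
  Nat.card {a : S // IsAtom a ∧ a ≤ x}

/-- A finite bounded-below poset is simplicial if every lower interval is isomorphic to
the Boolean lattice of subsets of the set of atoms below. -/
def IsSimplicialPoset (S : Type*) [PartialOrder S] [OrderBot S] [Fintype S] : Prop :=
  ∀ x : S, Nonempty (Set.Iic x ≃o Set {a : S // IsAtom a ∧ a ≤ x})

/-- A matroid scheme: a rank function `ρ` on a finite simplicial poset `S`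
satisfying (M1)–(M5). -/
structure IsMatroidScheme {S : Type*} [PartialOrder S] [OrderBot S] [Fintype S]
    (ρ : S → ℕ) : Prop where
  simplicial : IsSimplicialPoset S
  M1 : ∀ x : S, ρ x ≤ natRank x
  M2 : ∀ ⦃x y : S⦄, x ≤ y → ρ x ≤ ρ y
  M3 : ∀ x y u l : S, u ∈ mub x y → l ∈ mlb x y → ρ u + ρ l ≤ ρ x + ρ y
  M4 : ∀ x y l : S, l ∈ mlb x y → ρ x = ρ l → (mub x y).Nonempty
  M5 : ∀ x y : S, ρ x < ρ y →
    ∃ a : S, IsAtom a ∧ a ≤ y ∧ ¬ a ≤ x ∧ (mub x a).Nonempty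

/-- `cl` is the closure operator of a matroid scheme `(S, ρ)`:
`cl x` is the greatest element above `x` of the same rank. -/
def IsClosureFun {S : Type*} [PartialOrder S] (ρ : S → ℕ) (cl : S → S) : Prop :=
  ∀ x : S, x ≤ cl x ∧ ρ (cl x) = ρ x ∧ ∀ y : S, x ≤ y → ρ y = ρ x → y ≤ cl x

/-- The bases of a matroid scheme: the maximal independent elements. -/
def Bases {S : Type*} [PartialOrder S] [OrderBot S] (ρ : S → ℕ) : Set S :=
  {x | ρ x = natRank x ∧ ∀ w, ρ w = natRank w → x ≤ w → w = x}

/-- The circuits of a matroid scheme: the minimal dependent elements. -/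
def Circuits {S : Type*} [PartialOrder S] [OrderBot S] (ρ : S → ℕ) : Set S :=
  {x | ρ x < natRank x ∧ ∀ y, ρ y < natRank y → y ≤ x → y = x}

/-- `c` is the complement `x ∖ a` of `a` in the Boolean lattice `S_{≤ x}`. -/
def IsComplementIn {S : Type*} [PartialOrder S] [OrderBot S] (c a x : S) : Prop :=
  c ≤ x ∧ a ≤ x ∧ (∀ l : S, l ≤ c → l ≤ a → l = ⊥) ∧
    (∀ u : S, u ≤ x → c ≤ u → a ≤ u → u = x)

/-- The rank of a matroid scheme: the common value of `ρ` on maximal elements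
(equal to the maximum value of `ρ`). -/
noncomputable def schemeRank {S : Type*} [Fintype S] (ρ : S → ℕ) : ℕ :=
  sSup (Set.range ρ)

/-- The Tutte polynomial of a matroid scheme, as a two-variable integer function. -/
noncomputable def tutte {S : Type*} [PartialOrder S] [OrderBot S] [Fintype S]
    (ρ : S → ℕ) (x y : ℤ) : ℤ :=
  ∑ w : S, (x - 1) ^ (schemeRank ρ - ρ w) * (y - 1) ^ (natRank w - ρ w)

/-- An element of a poset is an order-atom if it covers a global minimum. -/
def OrdAtom {P : Type*} [PartialOrder P] (a : P) : Prop :=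
  ∃ b : P, (∀ z : P, b ≤ z) ∧ b ⋖ a

/-- A partial order is a geometric lattice: it is bounded below, every pair has a least
upper bound and greatest lower bound, it is atomistic, and it is (upper) semimodular. -/
def IsGeomLatOrder (P : Type*) [PartialOrder P] : Prop :=
  (∃ b : P, ∀ x : P, b ≤ x) ∧
  (∀ x y : P, ∃ u : P, IsLUB {x, y} u) ∧
  (∀ x y : P, ∃ l : P, IsGLB {x, y} l) ∧
  (∀ x : P, IsLUB {a : P | OrdAtom a ∧ a ≤ x} x) ∧
  (∀ x y m j : P, IsGLB {x, y} m → IsLUB {x, y} j → m ⋖ x → y ⋖ j)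

/-- A geometric poset: a finite bounded-below poset with rank function `rk`
satisfying (G1) and (G2). -/
def IsGeometricPoset (P : Type*) [PartialOrder P] [OrderBot P] [Fintype P]
    (rk : P → ℕ) : Prop :=
  rk ⊥ = 0 ∧
  (∀ ⦃x y : P⦄, x ≤ y → rk x ≤ rk y) ∧
  (∀ x y : P, x ⋖ y → rk y = rk x + 1) ∧
  (∀ m : P, IsMax m → IsGeomLatOrder (Set.Iic m)) ∧
  (∀ (x : P) (A : Set P), (∀ a ∈ A, IsAtom a) →
    ∀ y ∈ mubSet A, rk x < rk y → rk y = Nat.card A →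
      ∃ a ∈ A, ¬ a ≤ x ∧ ∃ w : P, x ≤ w ∧ a ≤ w)

section AuxLemmas

variable {S : Type*} [PartialOrder S]

/-- Any common upper bound dominates a minimal upper bound. -/
lemma aux_exists_mub_le [Fintype S] {x b w : S} (hx : x ≤ w) (hb : b ≤ w) :
    ∃ u, u ∈ mub x b ∧ u ≤ w := by
  obtain ⟨u, hu, hmin⟩ := Set.Finite.exists_minimalFor id {v | x ≤ v ∧ b ≤ v ∧ v ≤ w}
    (Set.toFinite _) ⟨w, hx, hb, le_rfl⟩
  exact ⟨u, ⟨hu.1, hu.2.1, fun v hxv hbv hvu =>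
    le_antisymm hvu (hmin ⟨hxv, hbv, hvu.trans hu.2.2⟩ hvu)⟩, hu.2.2⟩

/-- Any common lower bound is dominated by a maximal lower bound. -/
lemma aux_exists_mlb_ge [Fintype S] {x y l0 : S} (hx : l0 ≤ x) (hy : l0 ≤ y) :
    ∃ l, l ∈ mlb x y ∧ l0 ≤ l := by
  obtain ⟨l, hl, hmax⟩ := Set.Finite.exists_maximalFor id {m | m ≤ x ∧ m ≤ y ∧ l0 ≤ m}
    (Set.toFinite _) ⟨l0, hx, hy, le_rfl⟩
  exact ⟨l, ⟨hl.1, hl.2.1, fun m hmx hmy hlm =>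
    le_antisymm (hmax ⟨hmx, hmy, hl.2.2.trans hlm⟩ hlm) hlm⟩, hl.2.2⟩

/-- Nonempty subsets of a finite poset have maximal elements. -/
lemma aux_exists_maximal [Fintype S] {T : Set S} (hT : T.Nonempty) :
    ∃ z ∈ T, ∀ w ∈ T, z ≤ w → w = z := by
  obtain ⟨z, hz, hmax⟩ := Set.Finite.exists_maximalFor id T (Set.toFinite _) hT
  exact ⟨z, hz, fun w hw hzw => le_antisymm (hmax hw hzw) hzw⟩

variable [OrderBot S]

/-- The bottom is a maximal lower bound of `x` and an atom not below `x`. -/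
lemma aux_bot_mem_mlb {x b : S} (hb : IsAtom b) (hbx : ¬ b ≤ x) : ⊥ ∈ mlb x b :=
  ⟨bot_le, bot_le, fun m hmx hmb _ =>
    (hb.le_iff.mp hmb).resolve_right (fun hh => hbx (hh ▸ hmx))⟩

lemma aux_natRank_bot : natRank (⊥ : S) = 0 := by
  haveI : IsEmpty {a : S // IsAtom a ∧ a ≤ ⊥} :=
    ⟨fun a => a.2.1.1 (le_bot_iff.mp a.2.2)⟩
  exact Nat.card_of_isEmpty

lemma aux_natRank_atom {a : S} (ha : IsAtom a) : natRank a = 1 := by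
  haveI : Nonempty {b : S // IsAtom b ∧ b ≤ a} := ⟨⟨a, ha, le_rfl⟩⟩
  haveI : Subsingleton {b : S // IsAtom b ∧ b ≤ a} := ⟨fun b c => Subtype.ext <| by
    rw [(ha.le_iff.mp b.2.2).resolve_left b.2.1.1,
      (ha.le_iff.mp c.2.2).resolve_left c.2.1.1]⟩
  exact Nat.card_unique

/-- Atoms of the interval `Set.Iic u` are exactly the atoms of `S` lying below `u`. -/
lemma aux_isAtom_Iic_iff {u : S} (a : Set.Iic u) : IsAtom a ↔ IsAtom a.val := by
  constructor
  · rintro ⟨h1, h2⟩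
    refine ⟨fun hbot => h1 (Subtype.ext hbot), fun b hb => ?_⟩
    have hbu : b ≤ u := hb.le.trans a.2
    have hlt : (⟨b, hbu⟩ : Set.Iic u) < a := Subtype.mk_lt_mk.mpr hb
    exact congrArg Subtype.val (h2 _ hlt)
  · rintro ⟨h1, h2⟩
    exact ⟨fun hbot => h1 (congrArg Subtype.val hbot),
      fun b hb => Subtype.ext (h2 b.val hb)⟩

/-- Order isomorphisms transport atoms (both types having a bottom). -/
lemma aux_iso_isAtom {α β : Type*} [PartialOrder α] [OrderBot α] [PartialOrder β] [OrderBot β]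
    (e : α ≃o β) (a : α) : IsAtom (e a) ↔ IsAtom a := OrderIso.isAtom_iff e a

/-- In a simplicial poset, the rank of `x ≤ u` is the cardinality of the subset of
atoms of `u` corresponding to `x` under the Boolean isomorphism. -/
lemma aux_natRank_eq_ncard {u : S}
    (e : Set.Iic u ≃o Set {a : S // IsAtom a ∧ a ≤ u}) {x : S} (hx : x ≤ u) :
    natRank x = (e ⟨x, hx⟩ : Set {a : S // IsAtom a ∧ a ≤ u}).ncard := by
  classical
  have key : ∀ t : {a : S // IsAtom a ∧ a ≤ u}, t ∈ (e ⟨x, hx⟩ : Set _) →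
      IsAtom (e.symm {t}).val ∧ (e.symm {t}).val ≤ x := by
    intro t ht
    constructor
    · rw [← aux_isAtom_Iic_iff]
      rw [← (aux_iso_isAtom e _)]
      rw [e.apply_symm_apply]
      exact Set.isAtom_singleton t
    · have h1 : e.symm {t} ≤ e.symm (e ⟨x, hx⟩) := e.symm.monotone (Set.singleton_subset_iff.mpr ht)
      rw [e.symm_apply_apply] at h1
      exact h1
  let g : (e ⟨x, hx⟩ : Set _) → {a : S // IsAtom a ∧ a ≤ x} :=
    fun t => ⟨(e.symm {t.val}).val, key t.val t.2⟩
  have hg : Function.Bijective g := by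
    constructor
    · intro t t' htt
      have h0 := congrArg Subtype.val htt
      have h2 : (e.symm {t.val} : Set.Iic u) = e.symm {t'.val} := Subtype.ext h0
      have h3 := e.symm.injective h2
      exact Subtype.ext (Set.singleton_eq_singleton_iff.mp h3)
    · rintro ⟨a, ha, hax⟩
      have hau : a ≤ u := hax.trans hx
      have hatom : IsAtom (e ⟨a, hau⟩) := by
        rw [aux_iso_isAtom]
        rw [aux_isAtom_Iic_iff]
        exact ha
      obtain ⟨t, ht⟩ := Set.isAtom_iff.mp hatom
      have htX : t ∈ (e ⟨x, hx⟩ : Set _) := by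
        have h1 : e ⟨a, hau⟩ ≤ e ⟨x, hx⟩ := e.monotone (Subtype.mk_le_mk.mpr hax)
        rw [ht] at h1
        exact h1 rfl
      refine ⟨⟨t, htX⟩, ?_⟩
      have h2 : e.symm {t} = (⟨a, hau⟩ : Set.Iic u) := by rw [← ht, e.symm_apply_apply]
      have h0 := congrArg Subtype.val h2
      exact Subtype.ext h0
  calc natRank x = Nat.card {a : S // IsAtom a ∧ a ≤ x} := rfl
    _ = Nat.card (e ⟨x, hx⟩ : Set _) := (Nat.card_eq_of_bijective g hg).symm
    _ = (e ⟨x, hx⟩ : Set {a : S // IsAtom a ∧ a ≤ u}).ncard := Nat.card_coe_set_eq _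

/-- In a simplicial poset, a minimal upper bound of `x` and an atom `a ≰ x` has
exactly one more atom below it than `x` does. -/
lemma aux_natRank_mub_atom [Fintype S] (hs : IsSimplicialPoset S) {x a u : S}
    (ha : IsAtom a) (hax : ¬ a ≤ x) (hu : u ∈ mub x a) :
    natRank u = natRank x + 1 := by
  classical
  obtain ⟨hxu, hau, hmin⟩ := hu
  obtain ⟨e⟩ := hs u
  set A := {b : S // IsAtom b ∧ b ≤ u}
  set X : Set A := e ⟨x, hxu⟩ with hX
  have hatom : IsAtom (e ⟨a, hau⟩) := by
    rw [aux_iso_isAtom, aux_isAtom_Iic_iff]; exact ha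
  obtain ⟨t, ht⟩ := Set.isAtom_iff.mp hatom
  have htX : t ∉ X := by
    intro htX
    apply hax
    have : e ⟨a, hau⟩ ≤ e ⟨x, hxu⟩ := by
      rw [ht, ← hX]; exact Set.singleton_subset_iff.mpr htX
    exact e.le_iff_le.mp this
  -- the element corresponding to X ∪ {t} is a common upper bound below u, hence equals u
  set v : Set.Iic u := e.symm (insert t X) with hv
  have hxv : x ≤ (v : S) := by
    have : e ⟨x, hxu⟩ ≤ insert t X := by rw [← hX]; exact Set.subset_insert t X
    have h2 : (⟨x, hxu⟩ : Set.Iic u) ≤ v := by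
      rw [hv]; exact e.le_symm_apply.mpr this
    exact h2
  have hav : a ≤ (v : S) := by
    have : e ⟨a, hau⟩ ≤ insert t X := by
      rw [ht]; exact Set.singleton_subset_iff.mpr (Set.mem_insert t X)
    have h2 : (⟨a, hau⟩ : Set.Iic u) ≤ v := by
      rw [hv]; exact e.le_symm_apply.mpr this
    exact h2
  have hvu : (v : S) = u := hmin _ hxv hav v.2
  have hins : insert t X = Set.univ := by
    have hvtop : v = ⊤ := Set.Iic.eq_top_iff.mpr hvu
    have := congrArg e hvtop
    rw [hv, e.apply_symm_apply] at this
    rw [this, OrderIso.map_top]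
    rfl
  have h1 : natRank u = (Set.univ : Set A).ncard := by
    have : (⊤ : Set.Iic u) = ⟨u, le_rfl⟩ := rfl
    have he : e ⟨u, le_rfl⟩ = Set.univ := by
      rw [← this, OrderIso.map_top]; rfl
    have := aux_natRank_eq_ncard e (le_refl u)
    rwa [he] at this
  have h2 : natRank x = X.ncard := aux_natRank_eq_ncard e hxu
  rw [h1, h2, ← hins, Set.ncard_insert_of_notMem htX X.toFinite]

/-- (I2): independence is downward closed, via complements in the Boolean interval. -/
lemma aux_indep_down [Fintype S] {ρ : S → ℕ} (h : IsMatroidScheme ρ)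
    {x y : S} (hxy : x ≤ y) (hy : ρ y = natRank y) : ρ x = natRank x := by
  classical
  obtain ⟨e⟩ := h.simplicial y
  set A := {b : S // IsAtom b ∧ b ≤ y}
  set X : Set A := e ⟨x, hxy⟩ with hX
  set c : S := (e.symm Xᶜ : Set.Iic y).val with hc
  have hcy : c ≤ y := (e.symm Xᶜ).2
  have hce : e ⟨c, hcy⟩ = Xᶜ := by
    have : (⟨c, hcy⟩ : Set.Iic y) = e.symm Xᶜ := rfl
    rw [this, e.apply_symm_apply]
  -- y is a minimal upper bound of x and c
  have hymub : y ∈ mub x c := by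
    refine ⟨hxy, hcy, fun v hxv hcv hvy => ?_⟩
    have h1 : X ≤ e ⟨v, hvy⟩ := by rw [hX]; exact e.monotone (Subtype.mk_le_mk.mpr hxv)
    have h2 : Xᶜ ≤ e ⟨v, hvy⟩ := by rw [← hce]; exact e.monotone (Subtype.mk_le_mk.mpr hcv)
    have huniv : e ⟨v, hvy⟩ = Set.univ := by
      apply Set.eq_univ_of_univ_subset
      rw [← Set.union_compl_self X]
      exact Set.union_subset h1 h2
    have : e ⟨v, hvy⟩ = e ⊤ := by rw [huniv, OrderIso.map_top]; rfl
    have := e.injective this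
    exact congrArg Subtype.val this
  -- ⊥ is a maximal lower bound of x and c
  have hbmlb : ⊥ ∈ mlb x c := by
    refine ⟨bot_le, bot_le, fun m hmx hmc _ => ?_⟩
    have hmy : m ≤ y := hmx.trans hxy
    have h1 : e ⟨m, hmy⟩ ≤ X := by rw [hX]; exact e.monotone (Subtype.mk_le_mk.mpr hmx)
    have h2 : e ⟨m, hmy⟩ ≤ Xᶜ := by rw [← hce]; exact e.monotone (Subtype.mk_le_mk.mpr hmc)
    have hempty : e ⟨m, hmy⟩ = ∅ := by
      rw [← Set.subset_empty_iff, ← Set.inter_compl_self X]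
      exact Set.subset_inter h1 h2
    have : e ⟨m, hmy⟩ = e ⊥ := by rw [hempty, OrderIso.map_bot]; rfl
    have := e.injective this
    exact congrArg Subtype.val this
  have hM3 := h.M3 x c y ⊥ hymub hbmlb
  have hrx : natRank x = X.ncard := aux_natRank_eq_ncard e hxy
  have hrc : natRank c = Xᶜ.ncard := by rw [aux_natRank_eq_ncard e hcy, hce]
  have hry : natRank y = X.ncard + Xᶜ.ncard := by
    have : (⊤ : Set.Iic y) = ⟨y, le_rfl⟩ := rfl
    have he : e ⟨y, le_rfl⟩ = Set.univ := by rw [← this, OrderIso.map_top]; rfl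
    have h4 := aux_natRank_eq_ncard e (le_refl y)
    rw [he] at h4
    rw [h4, Set.ncard_univ]
    exact (Set.ncard_add_ncard_compl X).symm
  have hm1x := h.M1 x
  have hm1c := h.M1 c
  omega

end AuxLemmas

/-- Theorem 6.2 (forward direction): the independence poset
`I(M) = {x : ρ x = |x|}` of a matroid scheme satisfies (I1)–(I4). -/
theorem statement6 {S : Type*} [PartialOrder S] [OrderBot S] [Fintype S]
    (ρ : S → ℕ) (h : IsMatroidScheme ρ) :
    ({x : S | ρ x = natRank x}).Nonempty ∧
    (∀ x y : S, x ≤ y → ρ y = natRank y → ρ x = natRank x) ∧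
    (∀ x y : S, ρ x = natRank x → ρ y = natRank y → natRank x < natRank y →
      ∃ a : S, IsAtom a ∧ a ≤ y ∧ ¬ a ≤ x ∧ (mub x a).Nonempty ∧
        mub x a ⊆ {z : S | ρ z = natRank z}) ∧
    (∀ x y z : S, ρ z = natRank z → z ≤ x →
      (∀ w : S, ρ w = natRank w → w ≤ x → z ≤ w → w = z) → z ≤ y →
      (mub x y).Nonempty) := by
  classical
  refine ⟨?_, ?_, ?_, ?_⟩
  · -- (I1)
    refine ⟨⊥, ?_⟩
    have h1 := h.M1 (⊥ : S)
    simp only [Set.mem_setOf_eq, aux_natRank_bot] at h1 ⊢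
    omega
  · -- (I2)
    exact fun x y hxy hy => aux_indep_down h hxy hy
  · -- (I3)
    intro x y hx hy hlt
    have hρ : ρ x < ρ y := by rw [hx, hy]; exact hlt
    obtain ⟨z, hz, hzmax⟩ := aux_exists_maximal (T := {w : S | x ≤ w ∧ ρ w = ρ x})
      ⟨x, le_rfl, rfl⟩
    obtain ⟨hxz, hρz⟩ := hz
    have hzy : ρ z < ρ y := by rw [hρz]; exact hρ
    obtain ⟨b, hb, hby, hbz, w, hw⟩ := h.M5 z y hzy
    have hbx : ¬ b ≤ x := fun hh => hbz (hh.trans hxz)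
    obtain ⟨u0, hu0, -⟩ := aux_exists_mub_le (hxz.trans hw.1) hw.2.1
    refine ⟨b, hb, hby, hbx, ⟨u0, hu0⟩, ?_⟩
    intro u hu
    simp only [Set.mem_setOf_eq]
    have hrank : natRank u = natRank x + 1 := aux_natRank_mub_atom h.simplicial hb hbx hu
    have hxu : x ≤ u := hu.1
    have hle : ρ u ≤ natRank u := h.M1 u
    have hge : ρ x ≤ ρ u := h.M2 hxu
    have hne : ρ u ≠ ρ x := by
      intro heq
      obtain ⟨l, hl, hxl⟩ := aux_exists_mlb_ge hxz hxu
      have hρl : ρ l = ρ z := le_antisymm (h.M2 hl.1) (by rw [hρz]; exact h.M2 hxl)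
      obtain ⟨v, hv⟩ := h.M4 z u l hl hρl.symm
      have hM3 := h.M3 z u v l hv hl
      have hρv_le : ρ v ≤ ρ x := by omega
      have hzv : z ≤ v := hv.1
      have hxv : x ≤ v := hxz.trans hzv
      have hvx : ρ v = ρ x := le_antisymm hρv_le (h.M2 hxv)
      have hvz : v = z := hzmax v ⟨hxv, hvx⟩ hzv
      exact hbz ((hu.2.1.trans hv.2.1).trans_eq hvz)
    omega
  · -- (I4)
    intro x y z hz hzx hzmaxI hzy
    have hρxz : ρ x = ρ z := by
      by_contra hne
      have hlt : ρ z < ρ x := lt_of_le_of_ne (h.M2 hzx) (fun hh => hne hh.symm)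
      obtain ⟨z', hz', hz'max⟩ := aux_exists_maximal
        (T := {w : S | z ≤ w ∧ w ≤ x ∧ ρ w = ρ z}) ⟨z, le_rfl, hzx, rfl⟩
      obtain ⟨hzz', hz'x, hρz'⟩ := hz'
      have hz'lt : ρ z' < ρ x := by rw [hρz']; exact hlt
      obtain ⟨a, ha, hax, haz', -⟩ := h.M5 z' x hz'lt
      obtain ⟨w, hw, hwx⟩ := aux_exists_mub_le hz'x hax
      have haz : ¬ a ≤ z := fun hh => haz' (hh.trans hzz')
      have hbot : (⊥ : S) ∈ mlb z' a := aux_bot_mem_mlb ha haz'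
      have hM3w := h.M3 z' a w ⊥ hw hbot
      have hρa : ρ a ≤ 1 := by
        have h1 := h.M1 a
        rwa [aux_natRank_atom ha] at h1
      have hwz' : z' ≤ w := hw.1
      have hwge : ρ z' ≤ ρ w := h.M2 hwz'
      have hwne : w ≠ z' := fun hh => haz' (hh ▸ hw.2.1)
      have hρw_ne : ρ w ≠ ρ z := fun hh => hwne (hz'max w ⟨hzz'.trans hwz', hwx, hh⟩ hwz')
      have hρw : ρ w = ρ z + 1 := by omega
      obtain ⟨u, hu, huw⟩ := aux_exists_mub_le (hzz'.trans hwz') hw.2.1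
      have hranku : natRank u = natRank z + 1 := aux_natRank_mub_atom h.simplicial ha haz hu
      have hρu_le : ρ u ≤ ρ z + 1 := (h.M2 huw).trans_eq hρw
      have hρu_ge : ρ z ≤ ρ u := h.M2 hu.1
      by_cases hcase : ρ u = ρ z
      · obtain ⟨l, hl, hzl⟩ := aux_exists_mlb_ge hzz' hu.1
        have hρl : ρ l = ρ z := le_antisymm (by rw [← hρz']; exact h.M2 hl.1) (h.M2 hzl)
        obtain ⟨v, hv, hvw⟩ := aux_exists_mub_le hwz' huw
        have hM3v := h.M3 z' u v l hv hl
        have hρv_le : ρ v ≤ ρ z := by omega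
        have hzv : z ≤ v := hzz'.trans hv.1
        have hρv : ρ v = ρ z := le_antisymm hρv_le (h.M2 hzv)
        have hvz' : v = z' := hz'max v ⟨hzv, hvw.trans hwx, hρv⟩ hv.1
        exact haz' ((hu.2.1.trans hv.2.1).trans_eq hvz')
      · have hρu : ρ u = ρ z + 1 := by omega
        have huind : ρ u = natRank u := by rw [hρu, hranku, hz]
        have huz : u = z := hzmaxI u huind (huw.trans hwx) hu.1
        exact haz (huz ▸ hu.2.1)
    obtain ⟨l, hl, hzl⟩ := aux_exists_mlb_ge hzx hzy
    have hρl : ρ x = ρ l := le_antisymm (by rw [hρxz]; exact h.M2 hzl) (h.M2 hl.1)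
    exact h.M4 x y l hl hρl
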